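/- arXiv:1407.7914 — 4 statements merged into one kernel-verified Lean document; each statement's English description precedes it below -/
import Mathlib

section
/- Let R be ℤ[A, A^{-1}] localized at the multiplicative set generated by {A^k - 1 : k ≥ 1}. Then for distinct nonnegative integers i and k, the element φ_i^2 - φ_k^2 (where φ_k := -A^{2k+2} - A^{-2k-2}) is a unit in R if and only if it is nonzero; in particular, show φ_i + φ_k and φ_i - φ_k are each products of a unit of ℤ[A,A^{-1}] and elements of the form A^m ± 1 with m ≥ 1, hence units in the further localization inverting also all A^m + 1. -/
open LaurentPolynomial

/-- φ_k = -A^{2k+2} - A^{-2k-2} in ℤ[A, A^{-1}]. -/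
noncomputable def phi (k : ℕ) : LaurentPolynomial ℤ := -T (2 * (k : ℤ) + 2) - T (-(2 * (k : ℤ) + 2))

/-- The multiplicative set of ℤ[A,A⁻¹] generated by {A^k - 1 : k ≥ 1}. -/
noncomputable def S₁ : Submonoid (LaurentPolynomial ℤ) :=
  Submonoid.closure {x | ∃ m : ℕ, 1 ≤ m ∧ x = T (m : ℤ) - 1}

/-- The multiplicative set generated by {A^m - 1 : m ≥ 1} ∪ {A^m + 1 : m ≥ 1}. -/
noncomputable def S₂ : Submonoid (LaurentPolynomial ℤ) :=
  Submonoid.closure {x | ∃ m : ℕ, 1 ≤ m ∧ (x = T (m : ℤ) - 1 ∨ x = T (m : ℤ) + 1)}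

/-- R = ℤ[A,A⁻¹] localized at the multiplicative set generated by {A^k - 1 : k ≥ 1}. -/
noncomputable abbrev Rloc : Type := Localization S₁

/-- The further localization inverting also all A^m + 1. -/
noncomputable abbrev Rloc' : Type := Localization S₂

lemma T_sub_one_ne_zero (m : ℤ) (hm : m ≠ 0) : (T m : LaurentPolynomial ℤ) - 1 ≠ 0 := by
  rw [sub_ne_zero, T, ← single_zero_one_eq_one]
  intro hc
  rcases AddMonoidAlgebra.single_inj.mp hc with ⟨h1, _⟩ | ⟨h1, _⟩
  · exact hm h1
  · exact one_ne_zero h1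

lemma key_add (a b : ℤ) :
    (-T a - T (-a)) + (-T b - T (-b)) =
      (-T (-a)) * ((T (a - b) + 1) * (T (a + b) + 1) : LaurentPolynomial ℤ) := by
  simp only [mul_add, add_mul, mul_one, one_mul, neg_mul, ← T_add]
  ring_nf

lemma key_sub (a b : ℤ) :
    (-T a - T (-a)) - (-T b - T (-b)) =
      (-T (-a)) * ((T (a - b) - 1) * (T (a + b) - 1) : LaurentPolynomial ℤ) := by
  simp only [mul_sub, sub_mul, mul_add, add_mul, mul_one, one_mul, neg_mul, mul_neg, ← T_add]
  ring_nf

lemma key_sq (a b : ℤ) :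
    (-T a - T (-a)) ^ 2 - (-T b - T (-b)) ^ 2 =
      T (-(2 * a)) * ((T (2 * a - 2 * b) - 1) * (T (2 * a + 2 * b) - 1) : LaurentPolynomial ℤ) := by
  simp only [sq, mul_sub, sub_mul, mul_add, add_mul, mul_one, one_mul, neg_mul, mul_neg, ← T_add]
  ring_nf

/-- Ordered version: all the statements, for `i < k`, about `phi k` versus `phi i`. -/
lemma phi_ordered (i k : ℕ) (h : i < k) :
    (IsUnit (algebraMap (LaurentPolynomial ℤ) Rloc (phi k ^ 2 - phi i ^ 2)) ↔
      phi k ^ 2 - phi i ^ 2 ≠ 0) ∧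
    (∃ u s : LaurentPolynomial ℤ, IsUnit u ∧ s ∈ S₂ ∧ phi k + phi i = u * s) ∧
    (∃ u s : LaurentPolynomial ℤ, IsUnit u ∧ s ∈ S₂ ∧ phi k - phi i = u * s) ∧
    IsUnit (algebraMap (LaurentPolynomial ℤ) Rloc' (phi k + phi i)) ∧
    IsUnit (algebraMap (LaurentPolynomial ℤ) Rloc' (phi k - phi i)) := by
  set a : ℤ := 2 * (k : ℤ) + 2 with ha
  set b : ℤ := 2 * (i : ℤ) + 2 with hb
  have hd : a - b = ((2 * (k - i) : ℕ) : ℤ) := by simp [ha, hb]; omega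
  have hsum : a + b = ((2 * (k + i) + 4 : ℕ) : ℤ) := by simp [ha, hb]; omega
  have hd2 : 2 * a - 2 * b = ((4 * (k - i) : ℕ) : ℤ) := by simp [ha, hb]; omega
  have hsum2 : 2 * a + 2 * b = ((4 * (k + i) + 8 : ℕ) : ℤ) := by simp [ha, hb]; omega
  have hdpos : 1 ≤ 2 * (k - i) := by omega
  have hd2pos : 1 ≤ 4 * (k - i) := by omega
  have heq_add : phi k + phi i = (-T (-a)) * ((T (a - b) + 1) * (T (a + b) + 1)) := key_add a b
  have heq_sub : phi k - phi i = (-T (-a)) * ((T (a - b) - 1) * (T (a + b) - 1)) := key_sub a b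
  have heq_sq : phi k ^ 2 - phi i ^ 2 =
      T (-(2 * a)) * ((T (2 * a - 2 * b) - 1) * (T (2 * a + 2 * b) - 1)) := key_sq a b
  have hs1 : (T (2 * a - 2 * b) - 1) * (T (2 * a + 2 * b) - 1) ∈ S₁ := by
    refine Submonoid.mul_mem _ (Submonoid.subset_closure ?_) (Submonoid.subset_closure ?_)
    · exact ⟨4 * (k - i), hd2pos, by rw [hd2]⟩
    · exact ⟨4 * (k + i) + 8, by omega, by rw [hsum2]⟩
  have hs2add : (T (a - b) + 1) * (T (a + b) + 1) ∈ S₂ := by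
    refine Submonoid.mul_mem _ (Submonoid.subset_closure ?_) (Submonoid.subset_closure ?_)
    · exact ⟨2 * (k - i), hdpos, Or.inr (by rw [hd])⟩
    · exact ⟨2 * (k + i) + 4, by omega, Or.inr (by rw [hsum])⟩
  have hs2sub : (T (a - b) - 1) * (T (a + b) - 1) ∈ S₂ := by
    refine Submonoid.mul_mem _ (Submonoid.subset_closure ?_) (Submonoid.subset_closure ?_)
    · exact ⟨2 * (k - i), hdpos, Or.inl (by rw [hd])⟩
    · exact ⟨2 * (k + i) + 4, by omega, Or.inl (by rw [hsum])⟩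
  have hu : IsUnit (-T (-a) : LaurentPolynomial ℤ) := (isUnit_T (-a)).neg
  refine ⟨?_, ⟨_, _, hu, hs2add, heq_add⟩, ⟨_, _, hu, hs2sub, heq_sub⟩, ?_, ?_⟩
  · constructor
    · intro _
      rw [heq_sq]
      refine mul_ne_zero ((isUnit_T _).ne_zero) (mul_ne_zero ?_ ?_)
      · exact T_sub_one_ne_zero _ (by rw [hd2]; omega)
      · exact T_sub_one_ne_zero _ (by rw [hsum2]; omega)
    · intro _
      rw [heq_sq, map_mul]
      exact ((isUnit_T _).map _).mul (IsLocalization.map_units (M := S₁) Rloc ⟨_, hs1⟩)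
  · rw [heq_add, map_mul]
    exact (hu.map _).mul (IsLocalization.map_units (M := S₂) Rloc' ⟨_, hs2add⟩)
  · rw [heq_sub, map_mul]
    exact (hu.map _).mul (IsLocalization.map_units (M := S₂) Rloc' ⟨_, hs2sub⟩)

/-- For distinct nonnegative integers i, k: φ_i² - φ_k² is a unit in R iff it is nonzero;
moreover φ_i + φ_k and φ_i - φ_k are each a unit of ℤ[A,A⁻¹] times a product of elements
of the form A^m ± 1 (m ≥ 1), hence units in the further localization inverting all A^m + 1. -/
theorem phi_sq_diff_unit (i k : ℕ) (h : i ≠ k) :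
    (IsUnit (algebraMap (LaurentPolynomial ℤ) Rloc (phi i ^ 2 - phi k ^ 2)) ↔
      phi i ^ 2 - phi k ^ 2 ≠ 0) ∧
    (∃ u s : LaurentPolynomial ℤ, IsUnit u ∧ s ∈ S₂ ∧ phi i + phi k = u * s) ∧
    (∃ u s : LaurentPolynomial ℤ, IsUnit u ∧ s ∈ S₂ ∧ phi i - phi k = u * s) ∧
    IsUnit (algebraMap (LaurentPolynomial ℤ) Rloc' (phi i + phi k)) ∧
    IsUnit (algebraMap (LaurentPolynomial ℤ) Rloc' (phi i - phi k)) := by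
  rcases lt_or_gt_of_ne h with hlt | hgt
  · obtain ⟨h1, ⟨u2, s2, hu2, hs2, he2⟩, ⟨u3, s3, hu3, hs3, he3⟩, h4, h5⟩ := phi_ordered i k hlt
    refine ⟨?_, ⟨u2, s2, hu2, hs2, by rw [add_comm]; exact he2⟩,
      ⟨-u3, s3, hu3.neg, hs3, by rw [neg_mul, ← he3]; ring⟩, by rwa [add_comm], ?_⟩
    · rw [show phi i ^ 2 - phi k ^ 2 = -(phi k ^ 2 - phi i ^ 2) by ring, map_neg]
      exact (IsUnit.neg_iff _).trans (h1.trans neg_ne_zero.symm)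
    · rw [show phi i - phi k = -(phi k - phi i) by ring, map_neg]
      exact h5.neg
  · exact phi_ordered k i hgt
end

section
/- In ℤ[A, A^{-1}], the ideal generated by 9 and 4 + A^4 is a proper ideal (not equal to the whole ring). -/
open LaurentPolynomial

noncomputable section

/-- The target ring: (ℤ/9)[X] / (X⁴ + 4). -/
abbrev Saux : Type := (Polynomial (ZMod 9)) ⧸ (Ideal.span {(Polynomial.X ^ 4 + 4 : Polynomial (ZMod 9))})

lemma Saux_nontrivial : Nontrivial Saux := by
  apply Ideal.Quotient.nontrivial_iff.mpr
  intro h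
  rw [Ideal.span_singleton_eq_top] at h
  have hm : (Polynomial.X ^ 4 + 4 : Polynomial (ZMod 9)).Monic := by
    apply Polynomial.monic_X_pow_add
    refine lt_of_le_of_lt ?_ (by norm_num : (0 : WithBot ℕ) < 4)
    compute_degree
  have heq := hm.eq_one_of_isUnit h
  have h4 := congrArg (Polynomial.eval 0) heq
  simp at h4
  exact absurd h4 (by decide)

/-- The image of X in Saux. -/
def xS : Saux := Ideal.Quotient.mk _ Polynomial.X

lemma xS_pow : xS ^ 4 = -4 := by
  have : (Ideal.Quotient.mk (Ideal.span {(Polynomial.X ^ 4 + 4 : Polynomial (ZMod 9))}))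
      (Polynomial.X ^ 4 + 4) = 0 := by
    apply Ideal.Quotient.eq_zero_iff_mem.mpr
    exact Ideal.subset_span rfl
  have := this
  rw [map_add, map_pow] at this
  have h4 : (Ideal.Quotient.mk (Ideal.span {(Polynomial.X ^ 4 + 4 : Polynomial (ZMod 9))}))
      (4 : Polynomial (ZMod 9)) = (4 : Saux) := by
    simp [map_ofNat]
  rw [h4] at this
  have : xS ^ 4 + 4 = 0 := this
  linear_combination this

lemma xS_unit : IsUnit xS := by
  refine IsUnit.of_mul_eq_one (a := xS) ((2 : Saux) * xS ^ 3) ?_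
  have h9 : (9 : Saux) = 0 := by
    have : (9 : ZMod 9) = 0 := by decide
    calc (9 : Saux) = algebraMap (ZMod 9) Saux 9 := by rw [map_ofNat]
    _ = 0 := by rw [this, map_zero]
  have hx := xS_pow
  linear_combination (2 : Saux) * hx - h9

/-- In ℤ[A, A^{-1}], the ideal generated by 9 and 4 + T 4 is proper. -/
theorem ideal_nine_proper :
    Ideal.span ({9, 4 + T 4} : Set (LaurentPolynomial ℤ)) ≠ ⊤ := by
  have : Nontrivial Saux := Saux_nontrivial
  -- build the algebra hom ℤ[T,T⁻¹] →ₐ[ℤ] Saux sending T n ↦ xS ^ n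
  set u : Sauxˣ := xS_unit.unit with hu
  let F : Multiplicative ℤ →* Saux := (Units.coeHom Saux).comp (zpowersHom Sauxˣ u)
  let f : LaurentPolynomial ℤ →ₐ[ℤ] Saux := AddMonoidAlgebra.lift ℤ Saux ℤ F
  have hT : ∀ n : ℤ, f (T n) = ((u ^ n : Sauxˣ) : Saux) := by
    intro n
    show f (AddMonoidAlgebra.single n 1) = _
    rw [AddMonoidAlgebra.lift_single]
    simp [F, zpowersHom_apply]
  have h9 : f 9 = 0 := by
    rw [map_ofNat]
    have : (9 : ZMod 9) = 0 := by decide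
    calc (9 : Saux) = algebraMap (ZMod 9) Saux 9 := by rw [map_ofNat]
    _ = 0 := by rw [this, map_zero]
  have h2 : f (4 + T 4) = 0 := by
    rw [map_add, hT, map_ofNat]
    have hu4 : ((u ^ (4 : ℤ) : Sauxˣ) : Saux) = xS ^ 4 := by
      rw [show (4 : ℤ) = ((4 : ℕ) : ℤ) by norm_num, zpow_natCast, Units.val_pow_eq_pow_val]
      congr 1
    rw [hu4, xS_pow]
    ring
  intro h
  have hle : Ideal.span ({9, 4 + T 4} : Set (LaurentPolynomial ℤ)) ≤ RingHom.ker f.toRingHom := by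
    rw [Ideal.span_le]
    rintro x (rfl | rfl)
    · exact h9
    · exact h2
  rw [h, top_le_iff] at hle
  have h1 : f 1 = 0 := by
    have : (1 : LaurentPolynomial ℤ) ∈ RingHom.ker f.toRingHom := hle ▸ trivial
    exact this
  rw [map_one] at h1
  exact one_ne_zero h1

end
end

section
/- In ℤ[A, A^{-1}], the ideal generated by -9 and -2 + A^4 is a proper ideal. -/
open LaurentPolynomial

noncomputable section AuxNegNine

abbrev SAux : Type := Polynomial (ZMod 3) ⧸ Ideal.span ({Polynomial.X ^ 4 + 1} : Set (Polynomial (ZMod 3)))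

lemma SAux_span_ne_top : Ideal.span ({Polynomial.X ^ 4 + 1} : Set (Polynomial (ZMod 3))) ≠ ⊤ := by
  rw [Ne, Ideal.span_singleton_eq_top]
  apply Polynomial.not_isUnit_of_natDegree_pos
  have : (Polynomial.X ^ 4 + 1 : Polynomial (ZMod 3)).natDegree = 4 := by compute_degree!
  omega

instance : Nontrivial SAux := Ideal.Quotient.nontrivial_iff.mpr SAux_span_ne_top

def xAux : SAux := Ideal.Quotient.mk _ Polynomial.X

lemma xAux_pow4 : xAux ^ 4 = -1 := by
  have h : (Ideal.Quotient.mk (Ideal.span ({Polynomial.X ^ 4 + 1} : Set (Polynomial (ZMod 3)))))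
      (Polynomial.X ^ 4 + 1) = 0 := by
    rw [Ideal.Quotient.eq_zero_iff_mem]
    exact Ideal.subset_span rfl
  have : xAux ^ 4 + 1 = 0 := by
    rw [map_add, map_pow, map_one] at h
    exact h
  linear_combination this

def uAux : SAuxˣ :=
  ⟨xAux, -xAux ^ 3, by linear_combination -xAux_pow4, by linear_combination -xAux_pow4⟩

def gAux : Multiplicative ℤ →* SAux := (Units.coeHom SAux).comp (zpowersHom SAuxˣ uAux)

def fAux : LaurentPolynomial ℤ →ₐ[ℤ] SAux := AddMonoidAlgebra.lift ℤ SAux ℤ gAux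

lemma fAux_T (n : ℤ) : fAux (T n) = ((uAux ^ n : SAuxˣ) : SAux) := by
  rw [show T n = AddMonoidAlgebra.single n (1 : ℤ) from rfl]
  rw [fAux, AddMonoidAlgebra.lift_single]
  simp [gAux]

lemma three_eq_zero : (3 : SAux) = 0 := by
  have := map_natCast (algebraMap (ZMod 3) SAux) 3
  rw [show ((3 : ℕ) : ZMod 3) = 0 by decide] at this
  simpa using this.symm

end AuxNegNine

/-- In ℤ[A, A^{-1}], the ideal generated by -9 and -2 + A^4 is proper. -/
theorem ideal_neg_nine_proper :
    Ideal.span ({-9, -2 + T 4} : Set (LaurentPolynomial ℤ)) ≠ ⊤ := by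
  intro h
  have h9 : fAux (-9) = 0 := by
    rw [map_neg, map_ofNat]
    rw [show (9 : SAux) = 3 * 3 by norm_num, three_eq_zero]
    ring
  have hT : fAux (-2 + T 4) = 0 := by
    rw [map_add, fAux_T]
    have hu : ((uAux ^ (4 : ℤ) : SAuxˣ) : SAux) = xAux ^ 4 := by
      rw [show (4 : ℤ) = ((4 : ℕ) : ℤ) from rfl, zpow_natCast, Units.val_pow_eq_pow_val]
      rfl
    rw [hu, xAux_pow4, map_neg, map_ofNat]
    have h2 : (2 : SAux) = -1 := by linear_combination three_eq_zero
    rw [h2]; ring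
  have hle : Ideal.span ({-9, -2 + T 4} : Set (LaurentPolynomial ℤ)) ≤
      RingHom.ker fAux.toRingHom := by
    rw [Ideal.span_le]
    rintro p (rfl | rfl)
    · exact h9
    · exact hT
  rw [h, top_le_iff] at hle
  have h1 : fAux 1 = 0 := by
    have : (1 : LaurentPolynomial ℤ) ∈ RingHom.ker fAux.toRingHom := by rw [hle]; trivial
    exact this
  simp at h1
end

section
/- In ℤ[A, A^{-1}], consider the ideal I = ⟨9, 4 + A^4⟩. Every integer belonging to I is divisible by 3. (Hence any Laurent polynomial in I evaluated at A = 1 is divisible by 3.) -/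
open LaurentPolynomial

noncomputable section

abbrev Raux : Type := AdjoinRoot ((Polynomial.X)^4 - Polynomial.C 5 : Polynomial (ZMod 9))

lemma nine_zero : (9 : Raux) = 0 := by
  have h := map_ofNat (algebraMap (ZMod 9) Raux) 9
  rw [show (9 : ZMod 9) = 0 by decide, map_zero] at h
  exact h.symm

lemma root_pow_four : (AdjoinRoot.root _ : Raux)^4 = 5 := by
  have h := AdjoinRoot.isRoot_root ((Polynomial.X)^4 - Polynomial.C 5 : Polynomial (ZMod 9))
  simp [Polynomial.IsRoot, sub_eq_zero] at h
  rw [h]; exact map_ofNat _ 5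

def uaux : Rauxˣ where
  val := AdjoinRoot.root _
  inv := 2 * (AdjoinRoot.root _)^3
  val_inv := by
    have h : (AdjoinRoot.root _ : Raux) * (2 * (AdjoinRoot.root _)^3)
        = 2 * ((AdjoinRoot.root _)^4) := by ring
    rw [h, root_pow_four]; linear_combination nine_zero
  inv_val := by
    have h : (2 * (AdjoinRoot.root _ : Raux)^3) * AdjoinRoot.root _
        = 2 * ((AdjoinRoot.root _)^4) := by ring
    rw [h, root_pow_four]; linear_combination nine_zero

def phiaux : LaurentPolynomial ℤ →ₐ[ℤ] Raux :=
  AddMonoidAlgebra.lift ℤ Raux ℤ ((Units.coeHom Raux).comp (zpowersHom Rauxˣ uaux))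

lemma phi_T (k : ℤ) : phiaux (T k) = ((uaux ^ k : Rauxˣ) : Raux) := by
  show phiaux (AddMonoidAlgebra.single k 1) = _
  rw [phiaux, AddMonoidAlgebra.lift_single]
  simp

lemma int_inj (n : ℤ) (hn : (n : Raux) = 0) : (9 : ℤ) ∣ n := by
  have hmonic : ((Polynomial.X)^4 - Polynomial.C 5 : Polynomial (ZMod 9)).Monic := by
    apply Polynomial.monic_X_pow_sub_C <;> norm_num
  have hmk : (AdjoinRoot.mk _) ((n : Polynomial (ZMod 9))) = (0 : Raux) := by
    rw [map_intCast]; exact hn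
  rw [AdjoinRoot.mk_eq_zero] at hmk
  have hdeg4 : ((Polynomial.X)^4 - Polynomial.C 5 : Polynomial (ZMod 9)).degree = 4 := by
    compute_degree!
  have hdeg : ((n : Polynomial (ZMod 9))).degree < ((Polynomial.X)^4 - Polynomial.C 5 : Polynomial (ZMod 9)).degree := by
    rw [hdeg4]
    calc ((n : Polynomial (ZMod 9))).degree ≤ 0 := by
          rw [show ((n : Polynomial (ZMod 9))) = Polynomial.C (n : ZMod 9) by push_cast; rfl]
          exact Polynomial.degree_C_le
      _ < 4 := by norm_num
  haveI : Nontrivial (ZMod 9) := ⟨0, 1, by decide⟩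
  have hz : (n : Polynomial (ZMod 9)) = 0 := by
    have h2 := (Polynomial.modByMonic_eq_zero_iff_dvd hmonic).mpr hmk
    rwa [(Polynomial.modByMonic_eq_self_iff hmonic).mpr hdeg] at h2
  have h0 : (n : ZMod 9) = 0 := by
    have h1 := congrArg (fun p => Polynomial.coeff p 0) hz
    simpa using h1
  exact (ZMod.intCast_zmod_eq_zero_iff_dvd n 9).mp h0

/-- Every integer belonging to the ideal ⟨9, 4 + A⁴⟩ of ℤ[A, A⁻¹] is divisible by 3. -/
theorem int_in_ideal_div_three (n : ℤ)
    (h : (n : LaurentPolynomial ℤ) ∈ Ideal.span ({9, 4 + T 4} : Set (LaurentPolynomial ℤ))) :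
    (3 : ℤ) ∣ n := by
  have h9 : phiaux (9 : LaurentPolynomial ℤ) = 0 := by
    rw [map_ofNat]; exact nine_zero
  have hT : phiaux (4 + T 4) = 0 := by
    rw [map_add, phi_T]
    have h4 : ((uaux ^ (4:ℤ) : Rauxˣ) : Raux) = 5 := by
      rw [show (4:ℤ) = ((4:ℕ):ℤ) from rfl, zpow_natCast, Units.val_pow_eq_pow_val]
      exact root_pow_four
    rw [h4, show phiaux (4 : LaurentPolynomial ℤ) = 4 from map_ofNat _ 4]
    linear_combination nine_zero
  have hle : Ideal.span ({9, 4 + T 4} : Set (LaurentPolynomial ℤ)) ≤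
      RingHom.ker phiaux.toRingHom := by
    rw [Ideal.span_le]
    intro x hx
    rcases hx with hx | hx
    · subst hx; exact h9
    · simp only [Set.mem_singleton_iff] at hx; subst hx; exact hT
  have hn0 : phiaux ((n : LaurentPolynomial ℤ)) = 0 := hle h
  rw [map_intCast] at hn0
  exact dvd_trans (by norm_num) (int_inj n hn0)

end
end
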